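/- Let U be an open ball in ℝⁿ centered at the origin, m ∈ ℕ, 0 < α ≤ 1, and let f ∈ C^m(U). Suppose there are constants c_δ ≥ 0, for each multi-index δ with |δ| = m, such that |∂^δ f(x) − ∂^δ f(0)| ≤ c_δ ‖x‖^α for all x ∈ U. Then for every multi-index β with |β| ≤ m and every x ∈ U, |∂^β ( f − T_m(f) )(x)| ≤ ‖x‖^{m+α−|β|} · Σ_{|γ| = m−|β|} (1/γ!) c_{γ+β}, where the sum ranges over multi-indices γ with |γ| = m − |β|. -/

import Mathlib

noncomputable section

/-- ℝⁿ with the Euclidean norm. -/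
abbrev En (n : ℕ) := EuclideanSpace ℝ (Fin n)

/-- The `i`-th partial derivative of a function on ℝⁿ. -/
def pd {n : ℕ} (i : Fin n) (f : En n → ℝ) : En n → ℝ :=
  fun x => fderiv ℝ f x (EuclideanSpace.single i 1)

/-- The partial derivative `∂^β` associated with a multi-index `β`. -/
def pdM {n : ℕ} (β : Fin n → ℕ) (f : En n → ℝ) : En n → ℝ :=
  (List.ofFn (fun i : Fin n => (pd i)^[β i])).foldr (· ∘ ·) id f

/-- The finset of multi-indices `β` with `|β| ≤ m`. -/
def multiIdx (n m : ℕ) : Finset (Fin n → ℕ) :=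
  (Fintype.piFinset fun _ : Fin n => Finset.range (m + 1)).filter fun β => ∑ i, β i ≤ m

/-- The Taylor polynomial of order `m` of `f` at the origin:
`T_m(f)(x) = Σ_{|β| ≤ m} (1/β!) ∂^β f(0) x^β`. -/
def taylorPoly {n : ℕ} (m : ℕ) (f : En n → ℝ) : En n → ℝ :=
  fun x => ∑ β ∈ multiIdx n m,
    (∏ i, (Nat.factorial (β i) : ℝ))⁻¹ * pdM β f 0 * ∏ i, x i ^ β i

namespace S4

variable {n : ℕ}

/-- iterated partial derivative along a list of indices -/
def pdL (L : List (Fin n)) (f : En n → ℝ) : En n → ℝ := L.foldr pd f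

@[simp] lemma pdL_nil (f : En n → ℝ) : pdL [] f = f := rfl
@[simp] lemma pdL_cons (i : Fin n) (L : List (Fin n)) (f : En n → ℝ) :
    pdL (i :: L) f = pd i (pdL L f) := rfl

lemma pdL_append (L₁ L₂ : List (Fin n)) (f : En n → ℝ) :
    pdL (L₁ ++ L₂) f = pdL L₁ (pdL L₂ f) := by
  simp [pdL, List.foldr_append]

lemma pdL_replicate (k : ℕ) (i : Fin n) (f : En n → ℝ) :
    pdL (List.replicate k i) f = (pd i)^[k] f := by
  induction k with
  | zero => simp
  | succ k ih => rw [List.replicate_succ, pdL_cons, ih, Function.iterate_succ_apply']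

/-- the canonical list of indices attached to a multi-index -/
def mL (l : List (Fin n)) (β : Fin n → ℕ) : List (Fin n) :=
  (l.map fun i => List.replicate (β i) i).flatten

def mList (β : Fin n → ℕ) : List (Fin n) := mL (List.finRange n) β

lemma pdM_eq_pdL (β : Fin n → ℕ) (f : En n → ℝ) : pdM β f = pdL (mList β) f := by
  rw [pdM, mList, List.ofFn_eq_map]
  induction (List.finRange n) with
  | nil => rfl
  | cons a l ih =>
      simp only [List.map_cons, List.foldr_cons, mL, List.flatten_cons, pdL_append,
        pdL_replicate, Function.comp_apply]
      rw [ih]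
      rfl

lemma count_mList (β : Fin n → ℕ) (j : Fin n) : (mList β).count j = β j := by
  have h : ∀ l : List (Fin n), l.Nodup → (mL l β).count j = if j ∈ l then β j else 0 := by
    intro l hl
    induction l with
    | nil => simp [mL]
    | cons a l ih =>
        simp only [mL, List.map_cons, List.flatten_cons, List.count_append] at *
        rw [ih hl.of_cons, List.count_replicate]
        rcases eq_or_ne j a with rfl | hj
        · simp [List.count_replicate, (List.nodup_cons.1 hl).1]
        · simp [hj, Ne.symm hj]
  rw [mList, h _ (List.nodup_finRange n)]
  simp [List.mem_finRange]

lemma length_mList (β : Fin n → ℕ) : (mList β).length = ∑ i, β i := by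
  have h1 : ∀ l : List (Fin n), l.length = ∑ j, l.count j := by
    intro l
    induction l with
    | nil => simp
    | cons a l ih =>
        simp only [List.length_cons, List.count_cons, ih, Finset.sum_add_distrib]
        simp [Finset.sum_ite_eq]
  rw [h1]; simp [count_mList]

section Smooth
variable {n : ℕ} {U : Set (En n)} {f g : En n → ℝ}

lemma pd_contDiffOn {k : ℕ} (hU : IsOpen U) (hf : ContDiffOn ℝ (k + 1 : ℕ) f U) (i : Fin n) :
    ContDiffOn ℝ (k : ℕ) (pd i f) U := by
  have h1 : ContDiffOn ℝ (k : ℕ) (fderiv ℝ f) U := by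
    apply hf.fderiv_of_isOpen hU
    exact_mod_cast le_refl ((k : WithTop ℕ∞) + 1)
  exact h1.clm_apply contDiffOn_const

lemma pdL_contDiffOn {k : ℕ} (hU : IsOpen U) (L : List (Fin n))
    (hf : ContDiffOn ℝ (L.length + k : ℕ) f U) :
    ContDiffOn ℝ (k : ℕ) (pdL L f) U := by
  induction L generalizing k with
  | nil => simpa using hf
  | cons a L ih =>
      rw [pdL_cons]
      apply pd_contDiffOn hU
      apply ih
      convert hf using 2
      simp [List.length_cons]; ring

lemma pd_smooth (hg : ContDiff ℝ (⊤ : ℕ∞) g) (i : Fin n) : ContDiff ℝ (⊤ : ℕ∞) (pd i g) := by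
  have h1 : ContDiff ℝ (⊤ : ℕ∞) (fderiv ℝ g) := by
    apply hg.fderiv_right
    exact le_refl _
  exact h1.clm_apply contDiff_const

lemma pdL_smooth (hg : ContDiff ℝ (⊤ : ℕ∞) g) (L : List (Fin n)) :
    ContDiff ℝ (⊤ : ℕ∞) (pdL L g) := by
  induction L with
  | nil => simpa using hg
  | cons a L ih => exact pd_smooth ih a

lemma pd_congr (hU : IsOpen U) (h : Set.EqOn f g U) (i : Fin n) :
    Set.EqOn (pd i f) (pd i g) U := by
  intro x hx
  have : f =ᶠ[nhds x] g := Filter.eventuallyEq_of_mem (hU.mem_nhds hx) h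
  simp only [pd, this.fderiv_eq]

lemma pd_comm (hU : IsOpen U) (hf : ContDiffOn ℝ (2 : ℕ) f U) (i j : Fin n) {x : En n}
    (hx : x ∈ U) : pd i (pd j f) x = pd j (pd i f) x := by
  have hat : ContDiffAt ℝ (2 : ℕ) f x := (hf x hx).contDiffAt (hU.mem_nhds hx)
  have hsym : IsSymmSndFDerivAt ℝ f x := hat.isSymmSndFDerivAt (by norm_num)
  have hd : DifferentiableAt ℝ (fderiv ℝ f) x := by
    have := hat.fderiv_right (m := 1) (by norm_num)
    exact this.differentiableAt (by norm_num)
  have key : ∀ v w : Fin n, pd v (pd w f) x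
      = fderiv ℝ (fderiv ℝ f) x (EuclideanSpace.single v 1) (EuclideanSpace.single w 1) := by
    intro v w
    have h := fderiv_clm_apply hd (differentiableAt_const (EuclideanSpace.single w (1:ℝ)))
    have hpdw : pd w f = fun y => fderiv ℝ f y (EuclideanSpace.single w 1) := rfl
    simp only [pd, hpdw]
    rw [h]
    simp
  rw [key, key, hsym]

end Smooth
section Perm
variable {n : ℕ} {U : Set (En n)} {f g : En n → ℝ}

lemma pdL_perm (hU : IsOpen U) {L₁ L₂ : List (Fin n)} (hp : L₁.Perm L₂)
    (hf : ContDiffOn ℝ (L₁.length : ℕ) f U) : Set.EqOn (pdL L₁ f) (pdL L₂ f) U := by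
  induction hp with
  | nil => exact fun x _ => rfl
  | cons a h ih =>
      rename_i l₁ l₂
      have hf' : ContDiffOn ℝ (l₁.length : ℕ) f U := by
        apply hf.of_le; exact_mod_cast Nat.le_succ _
      exact pd_congr hU (ih hf') a
  | swap a b l =>
      intro x hx
      simp only [pdL_cons]
      exact pd_comm hU (pdL_contDiffOn hU l (by exact_mod_cast hf)) b a hx
  | trans h₁ h₂ ih₁ ih₂ =>
      intro x hx
      rw [ih₁ hf hx]
      rw [h₁.length_eq] at hf
      exact ih₂ hf hx

/-- increment a multi-index at one coordinate -/
def upd (β : Fin n → ℕ) (i : Fin n) : Fin n → ℕ := Function.update β i (β i + 1)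

lemma sum_upd (β : Fin n → ℕ) (i : Fin n) : ∑ j, upd β i j = (∑ j, β j) + 1 := by
  rw [upd, Finset.sum_update_of_mem (Finset.mem_univ i),
    ← Finset.add_sum_erase _ β (Finset.mem_univ i), Finset.erase_eq]
  ring

lemma mList_upd_perm (β : Fin n → ℕ) (i : Fin n) :
    (mList (upd β i)).Perm (i :: mList β) := by
  rw [List.perm_iff_count]
  intro j
  rw [List.count_cons, count_mList, count_mList]
  rcases eq_or_ne j i with rfl | hj
  · simp [upd]
  · simp [upd, Function.update_of_ne hj, hj, Ne.symm hj]

lemma pdM_upd (hU : IsOpen U) (β : Fin n → ℕ) (i : Fin n)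
    (hf : ContDiffOn ℝ ((∑ j, β j) + 1 : ℕ) f U) :
    Set.EqOn (pdM (upd β i) f) (pd i (pdM β f)) U := by
  intro x hx
  rw [pdM_eq_pdL, pdM_eq_pdL]
  have := pdL_perm hU (mList_upd_perm β i) (by rwa [length_mList, sum_upd]) hx
  rw [this]
  rfl

lemma pd_sub (hU : IsOpen U) (hf : DifferentiableOn ℝ f U) (hg : Differentiable ℝ g)
    (i : Fin n) : Set.EqOn (pd i (fun y => f y - g y)) (fun y => pd i f y - pd i g y) U := by
  intro x hx
  have hfx : DifferentiableAt ℝ f x := (hf x hx).differentiableAt (hU.mem_nhds hx)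
  simp only [pd]
  rw [fderiv_fun_sub hfx (hg x)]
  simp

lemma pdL_sub (hU : IsOpen U) (L : List (Fin n)) (hf : ContDiffOn ℝ (L.length : ℕ) f U)
    (hg : ContDiff ℝ (⊤ : ℕ∞) g) :
    Set.EqOn (pdL L (fun y => f y - g y)) (fun y => pdL L f y - pdL L g y) U := by
  induction L with
  | nil => intro x _; rfl
  | cons a L ih =>
      intro x hx
      rw [pdL_cons]
      have h1 : Set.EqOn (pd a (pdL L fun y => f y - g y))
          (pd a (fun y => pdL L f y - pdL L g y)) U := by
        apply pd_congr hU
        apply ih (hf.of_le (by exact_mod_cast Nat.le_succ _))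
      rw [h1 hx]
      have h2 : DifferentiableOn ℝ (pdL L f) U := by
        have := pdL_contDiffOn (k := 1) hU L (by simpa using hf)
        exact this.differentiableOn (by norm_num)
      have h3 := pd_sub hU h2 ((pdL_smooth hg L).differentiable (by simp)) a
      rw [h3 hx]
      rfl

lemma pdM_sub (hU : IsOpen U) (β : Fin n → ℕ) (hf : ContDiffOn ℝ (∑ j, β j : ℕ) f U)
    (hg : ContDiff ℝ (⊤ : ℕ∞) g) :
    Set.EqOn (pdM β (fun y => f y - g y)) (fun y => pdM β f y - pdM β g y) U := by
  intro x hx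
  rw [pdM_eq_pdL, pdM_eq_pdL, pdM_eq_pdL]
  exact pdL_sub hU (mList β) (by rwa [length_mList]) hg hx

end Perm
section Mono
variable {n : ℕ}

def mono (δ : Fin n → ℕ) : En n → ℝ := fun x => ∏ i, x i ^ δ i

lemma mono_smooth (δ : Fin n → ℕ) : ContDiff ℝ (⊤ : ℕ∞) (mono δ) := by
  apply contDiff_prod
  intro i _
  exact ((EuclideanSpace.proj (𝕜 := ℝ) i).contDiff).pow (δ i)

lemma hasFDerivAt_mono (δ : Fin n → ℕ) (x : En n) :
    HasFDerivAt (mono δ)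
      (∑ j, (∏ k ∈ Finset.univ.erase j, x k ^ δ k) •
        (((δ j : ℝ) * x j ^ (δ j - 1)) • (EuclideanSpace.proj j : En n →L[ℝ] ℝ))) x := by
  apply HasFDerivAt.finset_prod (u := Finset.univ)
    (g := fun j (y : En n) => y j ^ δ j)
    (g' := fun j => ((δ j : ℝ) * x j ^ (δ j - 1)) • (EuclideanSpace.proj j : En n →L[ℝ] ℝ))
  intro j _
  have hp : HasFDerivAt (fun y : En n => y j) (EuclideanSpace.proj (𝕜 := ℝ) j) x :=
    (EuclideanSpace.proj (𝕜 := ℝ) j : En n →L[ℝ] ℝ).hasFDerivAt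
  exact (hasDerivAt_pow (δ j) (x j)).comp_hasFDerivAt x hp

lemma pd_mono (i : Fin n) (δ : Fin n → ℕ) :
    pd i (mono δ) = fun x => (δ i : ℝ) * mono (Function.update δ i (δ i - 1)) x := by
  funext x
  rw [pd, (hasFDerivAt_mono δ x).fderiv]
  rw [ContinuousLinearMap.sum_apply]
  have h1 : ∀ j : Fin n, (EuclideanSpace.proj j : En n →L[ℝ] ℝ) (EuclideanSpace.single i 1)
      = if j = i then (1:ℝ) else 0 := by
    intro j
    have : (EuclideanSpace.single i (1:ℝ)) j = if j = i then (1:ℝ) else 0 :=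
      EuclideanSpace.single_apply i 1 j
    simpa using this
  simp only [ContinuousLinearMap.smul_apply, h1, smul_eq_mul, mul_ite, mul_one, mul_zero]
  rw [Finset.sum_ite_eq' Finset.univ i]
  simp only [Finset.mem_univ, if_true]
  have h2 : ∏ j, x j ^ Function.update δ i (δ i - 1) j
      = x i ^ (δ i - 1) * ∏ j ∈ Finset.univ.erase i, x j ^ δ j := by
    rw [← Finset.mul_prod_erase _ _ (Finset.mem_univ i), Function.update_self]
    congr 1
    apply Finset.prod_congr rfl
    intro j hj
    rw [Function.update_of_ne (Finset.ne_of_mem_erase hj)]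
  rw [mono]
  show _ = (δ i : ℝ) * ∏ j, x j ^ Function.update δ i (δ i - 1) j
  rw [h2]
  ring

def dE : List (Fin n) → (Fin n → ℕ) → (Fin n → ℕ)
  | [], δ => δ
  | i :: L, δ => Function.update (dE L δ) i (dE L δ i - 1)

def dC : List (Fin n) → (Fin n → ℕ) → ℕ
  | [], _ => 1
  | i :: L, δ => dE L δ i * dC L δ

lemma pd_const_mul {g : En n → ℝ} (hg : ContDiff ℝ (⊤ : ℕ∞) g) (C : ℝ) (i : Fin n) :
    pd i (fun x => C * g x) = fun x => C * pd i g x := by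
  funext x
  rw [pd, fderiv_const_mul (hg.differentiable (by simp) x)]
  rfl

lemma pdL_mono (L : List (Fin n)) (δ : Fin n → ℕ) :
    pdL L (mono δ) = fun x => (dC L δ : ℝ) * mono (dE L δ) x := by
  induction L with
  | nil => funext x; simp [dC, dE]
  | cons a L ih =>
      rw [pdL_cons, ih, pd_const_mul (mono_smooth _), pd_mono]
      funext x
      show (dC L δ : ℝ) * ((dE L δ a : ℝ) * mono (Function.update (dE L δ) a (dE L δ a - 1)) x)
        = ((dC (a :: L) δ : ℝ)) * mono (dE (a :: L) δ) x
      rw [show dC (a :: L) δ = dE L δ a * dC L δ from rfl,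
        show dE (a :: L) δ = Function.update (dE L δ) a (dE L δ a - 1) from rfl]
      push_cast
      ring

lemma dE_append (L₁ L₂ : List (Fin n)) (δ : Fin n → ℕ) :
    dE (L₁ ++ L₂) δ = dE L₁ (dE L₂ δ) := by
  induction L₁ with
  | nil => rfl
  | cons a L ih => simp [dE, ih]

lemma dC_append (L₁ L₂ : List (Fin n)) (δ : Fin n → ℕ) :
    dC (L₁ ++ L₂) δ = dC L₁ (dE L₂ δ) * dC L₂ δ := by
  induction L₁ with
  | nil => simp [dC, dE]
  | cons a L ih => simp [dC, dE_append, ih]; ring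

lemma dE_replicate (k : ℕ) (i : Fin n) (δ : Fin n → ℕ) :
    dE (List.replicate k i) δ = Function.update δ i (δ i - k) := by
  induction k with
  | zero => simp [dE, Function.update_eq_self]
  | succ k ih =>
      rw [List.replicate_succ]
      show Function.update (dE (List.replicate k i) δ) i (dE (List.replicate k i) δ i - 1)
        = Function.update δ i (δ i - (k+1))
      rw [ih, Function.update_idem, Function.update_self, Nat.sub_sub]

lemma dC_replicate (k : ℕ) (i : Fin n) (δ : Fin n → ℕ) :
    dC (List.replicate k i) δ = Nat.descFactorial (δ i) k := by
  induction k with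
  | zero => simp [dC]
  | succ k ih =>
      rw [List.replicate_succ]
      show dE (List.replicate k i) δ i * dC (List.replicate k i) δ = _
      rw [ih, dE_replicate, Function.update_self, Nat.descFactorial_succ]

lemma mL_cons (a : Fin n) (l : List (Fin n)) (β : Fin n → ℕ) :
    mL (a :: l) β = List.replicate (β a) a ++ mL l β := by
  simp [mL]

lemma dE_mL {l : List (Fin n)} (hl : l.Nodup) (β δ : Fin n → ℕ) :
    dE (mL l β) δ = fun j => if j ∈ l then δ j - β j else δ j := by
  induction l with
  | nil => funext j; simp [mL, dE]
  | cons a l ih =>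
      rw [mL_cons, dE_append, ih hl.of_cons, dE_replicate]
      funext j
      rcases eq_or_ne j a with rfl | hj
      · have : j ∉ l := (List.nodup_cons.1 hl).1
        simp [this]
      · simp [Function.update_of_ne hj, hj]

lemma dC_mL {l : List (Fin n)} (hl : l.Nodup) (β δ : Fin n → ℕ) :
    dC (mL l β) δ = (l.map fun j => Nat.descFactorial (δ j) (β j)).prod := by
  induction l with
  | nil => simp [mL, dC]
  | cons a l ih =>
      rw [mL_cons, dC_append, ih hl.of_cons, dC_replicate, dE_mL hl.of_cons]
      have : a ∉ l := (List.nodup_cons.1 hl).1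
      simp [this]

lemma pdM_mono (β δ : Fin n → ℕ) :
    pdM β (mono δ) = fun x =>
      ((∏ j, Nat.descFactorial (δ j) (β j) : ℕ) : ℝ) * mono (fun j => δ j - β j) x := by
  rw [pdM_eq_pdL, pdL_mono]
  have h1 : dC (mList β) δ = ∏ j, Nat.descFactorial (δ j) (β j) := by
    rw [mList, dC_mL (List.nodup_finRange n), Fin.prod_univ_def]
  have h2 : dE (mList β) δ = fun j => δ j - β j := by
    rw [mList, dE_mL (List.nodup_finRange n)]
    simp [List.mem_finRange]
  rw [h1, h2]

end Mono
section TaylorD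
variable {n : ℕ}

lemma pd_sum {ι : Type*} (s : Finset ι) (g : ι → En n → ℝ)
    (hg : ∀ i ∈ s, ContDiff ℝ (⊤ : ℕ∞) (g i)) (j : Fin n) :
    pd j (fun x => ∑ i ∈ s, g i x) = fun x => ∑ i ∈ s, pd j (g i) x := by
  funext x
  rw [pd, fderiv_fun_sum (fun i hi => ((hg i hi).differentiable
    (by simp)) x)]
  rw [ContinuousLinearMap.sum_apply]
  rfl

lemma pdL_sum {ι : Type*} (L : List (Fin n)) (s : Finset ι) (g : ι → En n → ℝ)
    (hg : ∀ i ∈ s, ContDiff ℝ (⊤ : ℕ∞) (g i)) :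
    pdL L (fun x => ∑ i ∈ s, g i x) = fun x => ∑ i ∈ s, pdL L (g i) x := by
  induction L with
  | nil => rfl
  | cons a L ih =>
      rw [pdL_cons, ih, pd_sum s _ (fun i hi => pdL_smooth (hg i hi) L) a]
      rfl

lemma pdL_const_mul (L : List (Fin n)) {g : En n → ℝ} (hg : ContDiff ℝ (⊤ : ℕ∞) g) (C : ℝ) :
    pdL L (fun x => C * g x) = fun x => C * pdL L g x := by
  induction L with
  | nil => rfl
  | cons a L ih => rw [pdL_cons, ih, pd_const_mul (pdL_smooth hg L) C a]; rfl

lemma taylor_smooth (m : ℕ) (f : En n → ℝ) : ContDiff ℝ (⊤ : ℕ∞) (taylorPoly m f) := by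
  apply ContDiff.sum
  intro δ _
  exact (contDiff_const.mul contDiff_const).mul (mono_smooth δ)

lemma pdM_taylor (β : Fin n → ℕ) (m : ℕ) (f : En n → ℝ) :
    pdM β (taylorPoly m f) = fun x => ∑ δ ∈ multiIdx n m,
      (∏ i, (Nat.factorial (δ i) : ℝ))⁻¹ * pdM δ f 0 *
        (((∏ j, Nat.descFactorial (δ j) (β j)) : ℕ) : ℝ) * mono (fun j => δ j - β j) x := by
  have hT : taylorPoly m f = fun x => ∑ δ ∈ multiIdx n m,
      ((∏ i, (Nat.factorial (δ i) : ℝ))⁻¹ * pdM δ f 0) * mono δ x := rfl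
  rw [pdM_eq_pdL, hT, pdL_sum _ _ _
    (fun δ _ => contDiff_const.mul (mono_smooth δ))]
  funext x
  apply Finset.sum_congr rfl
  intro δ _
  rw [pdL_const_mul _ (mono_smooth δ), ← pdM_eq_pdL, pdM_mono]
  ring

end TaylorD
section TaylorEval
variable {n : ℕ}

lemma mem_multiIdx {m : ℕ} {β : Fin n → ℕ} (h : ∑ i, β i ≤ m) : β ∈ multiIdx n m := by
  rw [multiIdx, Finset.mem_filter]
  refine ⟨?_, h⟩
  rw [Fintype.mem_piFinset]
  intro i
  rw [Finset.mem_range, Nat.lt_succ_iff]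
  exact le_trans (Finset.single_le_sum (fun j _ => Nat.zero_le (β j)) (Finset.mem_univ i)) h

lemma coeff_self (β : Fin n → ℕ) (A : ℝ) :
    (∏ i, (Nat.factorial (β i) : ℝ))⁻¹ * A *
      (((∏ j, Nat.descFactorial (β j) (β j)) : ℕ) : ℝ) = A := by
  have h1 : ((∏ j, Nat.descFactorial (β j) (β j) : ℕ) : ℝ) = ∏ i, (Nat.factorial (β i) : ℝ) := by
    push_cast
    exact Finset.prod_congr rfl fun j _ => by rw [Nat.descFactorial_self]
  rw [h1]
  have h2 : (∏ i, (Nat.factorial (β i) : ℝ)) ≠ 0 :=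
    Finset.prod_ne_zero_iff.2 fun i _ => Nat.cast_ne_zero.2 (Nat.factorial_ne_zero _)
  field_simp

lemma term_eq_zero_of_lt {β δ : Fin n → ℕ} {j : Fin n} (hj : δ j < β j) (A : ℝ) (x : En n) (B : En n → ℝ) :
    A * (((∏ k, Nat.descFactorial (δ k) (β k)) : ℕ) : ℝ) * B x = 0 := by
  have : (∏ k, Nat.descFactorial (δ k) (β k)) = 0 :=
    Finset.prod_eq_zero (Finset.mem_univ j) (Nat.descFactorial_eq_zero_iff_lt.2 hj)
  rw [this]
  simp

lemma pdM_taylor_at_zero {m : ℕ} (f : En n → ℝ) {β : Fin n → ℕ} (hβ : ∑ i, β i ≤ m) :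
    pdM β (taylorPoly m f) 0 = pdM β f 0 := by
  rw [pdM_taylor]
  simp only []
  rw [Finset.sum_eq_single β]
  · have hm : mono (fun j => β j - β j) (0 : En n) = 1 := by
      simp [mono]
    rw [hm, mul_one]
    exact coeff_self β _
  · intro δ _ hδ
    by_cases hle : ∀ j, δ j ≤ β j
    · have : ∃ j, δ j < β j := by
        by_contra hno
        push_neg at hno
        exact hδ (funext fun j => le_antisymm (hle j) (hno j))
      obtain ⟨j, hj⟩ := this
      exact term_eq_zero_of_lt hj _ _ _
    · push_neg at hle
      obtain ⟨j, hj⟩ := hle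
      have hmono : mono (fun k => δ k - β k) (0 : En n) = 0 := by
        apply Finset.prod_eq_zero (Finset.mem_univ j)
        show (0 : En n) j ^ (δ j - β j) = 0
        have h0 : (0 : En n) j = 0 := rfl
        rw [h0]
        exact zero_pow (by omega)
      rw [hmono, mul_zero]
  · intro hmem
    exact absurd (mem_multiIdx hβ) hmem

lemma pdM_taylor_of_top {m : ℕ} (f : En n → ℝ) {β : Fin n → ℕ} (hβ : ∑ i, β i = m) :
    pdM β (taylorPoly m f) = fun _ => pdM β f 0 := by
  funext x
  rw [pdM_taylor]
  simp only []
  rw [Finset.sum_eq_single β]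
  · have hm : mono (fun j => β j - β j) x = 1 := by simp [mono]
    rw [hm, mul_one]
    exact coeff_self β _
  · intro δ hδmem hδ
    have hδsum : ∑ i, δ i ≤ m := (Finset.mem_filter.1 hδmem).2
    have : ∃ j, δ j < β j := by
      by_contra hno
      push_neg at hno
      have hlt : ∑ i, β i < ∑ i, δ i ∨ β = δ := by
        by_cases heq : β = δ
        · exact Or.inr heq
        · left
          obtain ⟨j0, hj0⟩ : ∃ j0, β j0 < δ j0 := by
            by_contra hall
            push_neg at hall
            exact heq (funext fun j => le_antisymm (hno j) (hall j))
          exact Finset.sum_lt_sum (fun i _ => hno i) ⟨j0, Finset.mem_univ j0, hj0⟩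
      rcases hlt with hlt | rfl
      · omega
      · exact hδ rfl
    obtain ⟨j, hj⟩ := this
    exact term_eq_zero_of_lt hj _ _ _
  · intro hmem
    exact absurd (mem_multiIdx hβ.le) hmem

end TaylorEval
section Comb
variable {n : ℕ}

/-- the sum appearing on the right-hand side -/
def Sm (m : ℕ) (c : (Fin n → ℕ) → ℝ) (β : Fin n → ℕ) : ℝ :=
  ∑ γ ∈ (Fintype.piFinset fun _ : Fin n => Finset.range (m + 1)).filter
      (fun γ => (∑ i, γ i) + (∑ i, β i) = m),
    (∏ i, (Nat.factorial (γ i) : ℝ))⁻¹ * c (fun i => γ i + β i)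

lemma Sm_nonneg {m : ℕ} {c : (Fin n → ℕ) → ℝ} (hc : ∀ δ, 0 ≤ c δ) (β : Fin n → ℕ) :
    0 ≤ Sm m c β := by
  apply Finset.sum_nonneg
  intro γ _
  apply mul_nonneg _ (hc _)
  apply inv_nonneg.2
  apply Finset.prod_nonneg
  intro i _
  positivity

lemma Sm_top {m : ℕ} {c : (Fin n → ℕ) → ℝ} {β : Fin n → ℕ} (hβ : ∑ i, β i = m) :
    Sm m c β = c β := by
  have hset : (Fintype.piFinset fun _ : Fin n => Finset.range (m + 1)).filter
      (fun γ => (∑ i, γ i) + (∑ i, β i) = m) = {fun _ => 0} := by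
    apply Finset.ext
    intro γ
    rw [Finset.mem_filter, Finset.mem_singleton]
    constructor
    · rintro ⟨_, hsum⟩
      rw [hβ] at hsum
      have h0 : ∑ i, γ i = 0 := by omega
      funext i
      exact (Finset.sum_eq_zero_iff.1 h0) i (Finset.mem_univ i)
    · rintro rfl
      refine ⟨?_, by simpa using hβ⟩
      rw [Fintype.mem_piFinset]
      intro i
      simp
  rw [Sm, hset, Finset.sum_singleton]
  simp

lemma Sm_rec {m j : ℕ} {c : (Fin n → ℕ) → ℝ} {β : Fin n → ℕ}
    (hβ1 : (∑ i, β i) + (j + 1) = m) :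
    ∑ i, Sm m c (upd β i) = (j + 1 : ℝ) * Sm m c β := by
  classical
  set A := (Fintype.piFinset fun _ : Fin n => Finset.range (m + 1)).filter
      (fun γ => (∑ i, γ i) + (∑ i, β i) = m) with hA
  have key : ∀ i : Fin n, Sm m c (upd β i)
      = ∑ γ ∈ A, (γ i : ℝ) * ((∏ k, (Nat.factorial (γ k) : ℝ))⁻¹ * c (fun k => γ k + β k)) := by
    intro i
    have hfil : ∑ γ ∈ A, (γ i : ℝ) * ((∏ k, (Nat.factorial (γ k) : ℝ))⁻¹ * c (fun k => γ k + β k))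
        = ∑ γ ∈ A.filter (fun γ => γ i ≠ 0),
            (γ i : ℝ) * ((∏ k, (Nat.factorial (γ k) : ℝ))⁻¹ * c (fun k => γ k + β k)) := by
      symm
      apply Finset.sum_filter_of_ne
      intro γ _ hne
      intro h0
      apply hne
      rw [h0]
      simp
    rw [hfil, Sm]
    apply Finset.sum_nbij' (i := fun γ' => upd γ' i)
      (j := fun γ => Function.update γ i (γ i - 1))
    · -- maps into
      intro γ' hγ'
      rw [Finset.mem_filter] at hγ'
      obtain ⟨hpi, hsum⟩ := hγ'
      rw [sum_upd] at hsum
      rw [Finset.mem_filter]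
      have hγsum : (∑ k, upd γ' i k) + (∑ k, β k) = m := by rw [sum_upd]; omega
      refine ⟨Finset.mem_filter.2 ⟨?_, hγsum⟩, by simp [upd]⟩
      rw [Fintype.mem_piFinset]
      intro k
      rw [Finset.mem_range, Nat.lt_succ_iff]
      calc upd γ' i k ≤ ∑ l, upd γ' i l :=
            Finset.single_le_sum (fun l _ => Nat.zero_le _) (Finset.mem_univ k)
      _ ≤ m := by omega
    · -- inverse maps into
      intro γ hγ
      rw [Finset.mem_filter, Finset.mem_filter] at hγ
      obtain ⟨⟨hpi, hsum⟩, hne⟩ := hγ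
      rw [Finset.mem_filter]
      constructor
      · rw [Fintype.mem_piFinset] at hpi ⊢
        intro k
        have hk' := hpi k
        rw [Finset.mem_range] at hk' ⊢
        rcases eq_or_ne k i with rfl | hk
        · rw [Function.update_self]; omega
        · rw [Function.update_of_ne hk]; omega
      · rw [sum_upd]
        have : ∑ k, Function.update γ i (γ i - 1) k = (∑ k, γ k) - 1 := by
          rw [Finset.sum_update_of_mem (Finset.mem_univ i), ← Finset.erase_eq,
            ← Finset.add_sum_erase _ γ (Finset.mem_univ i)]
          omega
        rw [this]
        omega
    · -- left inverse
      intro γ' hγ'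
      funext k
      rcases eq_or_ne k i with rfl | hk
      · simp [upd]
      · simp [upd, Function.update_of_ne hk]
    · -- right inverse
      intro γ hγ
      rw [Finset.mem_filter] at hγ
      have hne : γ i ≠ 0 := hγ.2
      funext k
      rcases eq_or_ne k i with rfl | hk
      · simp only [upd, Function.update_self]
        omega
      · simp [upd, Function.update_of_ne hk]
    · -- terms agree
      intro γ' hγ'
      have harg : (fun k => γ' k + upd β i k) = (fun k => upd γ' i k + β k) := by
        funext k
        rcases eq_or_ne k i with rfl | hk
        · simp [upd]; omega
        · simp [upd, Function.update_of_ne hk]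
      have hfac : (∏ k, (Nat.factorial (γ' k) : ℝ))⁻¹
          = ((upd γ' i i : ℝ)) * (∏ k, (Nat.factorial (upd γ' i k) : ℝ))⁻¹ := by
        have h1 : ∏ k, (Nat.factorial (upd γ' i k) : ℝ)
            = (γ' i + 1 : ℝ) * ∏ k, (Nat.factorial (γ' k) : ℝ) := by
          rw [← Finset.mul_prod_erase _ _ (Finset.mem_univ i),
            ← Finset.mul_prod_erase _ (fun k => (Nat.factorial (γ' k) : ℝ)) (Finset.mem_univ i)]
          have h2 : ∀ k ∈ Finset.univ.erase i,
              (Nat.factorial (upd γ' i k) : ℝ) = (Nat.factorial (γ' k) : ℝ) := by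
            intro k hk
            rw [upd, Function.update_of_ne (Finset.ne_of_mem_erase hk)]
          rw [Finset.prod_congr rfl h2]
          have h3 : (Nat.factorial (upd γ' i i) : ℝ)
              = (γ' i + 1 : ℝ) * (Nat.factorial (γ' i) : ℝ) := by
            rw [upd, Function.update_self, Nat.factorial_succ]
            push_cast; ring
          rw [h3]; ring
        rw [h1]
        have hne : (γ' i + 1 : ℝ) ≠ 0 := by positivity
        have hfne : (∏ k, (Nat.factorial (γ' k) : ℝ)) ≠ 0 :=
          Finset.prod_ne_zero_iff.2 fun k _ => Nat.cast_ne_zero.2 (Nat.factorial_ne_zero _)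
        rw [mul_inv]
        rw [show ((upd γ' i i : ℕ) : ℝ) = (γ' i + 1 : ℝ) by simp [upd]]
        field_simp
      rw [harg, hfac]
      ring
  rw [Finset.sum_congr rfl (fun i _ => key i)]
  rw [Finset.sum_comm]
  rw [Sm, ← hA, Finset.mul_sum]
  apply Finset.sum_congr rfl
  intro γ hγ
  rw [← Finset.sum_mul]
  have : ∑ i, (γ i : ℝ) = (j + 1 : ℝ) := by
    rw [Finset.mem_filter] at hγ
    have := hγ.2
    have hs : ∑ i, γ i = j + 1 := by omega
    rw [← Nat.cast_sum, hs]
    push_cast; ring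
  rw [this]

end Comb
section Anal
variable {n : ℕ}

lemma abs_coord_le_norm (x : En n) (i : Fin n) : |x i| ≤ ‖x‖ := by
  rw [EuclideanSpace.norm_eq]
  calc |x i| = Real.sqrt (‖x i‖ ^ 2) := by
        rw [Real.norm_eq_abs, Real.sqrt_sq_eq_abs, abs_abs]
  _ ≤ _ := by
        apply Real.sqrt_le_sqrt
        exact Finset.single_le_sum (fun j _ => sq_nonneg ‖x j‖) (Finset.mem_univ i)

lemma clm_decomp (x : En n) (φ : En n →L[ℝ] ℝ) :
    φ x = ∑ i, x i * φ (EuclideanSpace.single i 1) := by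
  have hx : x = ∑ i, x i • EuclideanSpace.single i (1:ℝ) := by
    have h := (EuclideanSpace.basisFun (Fin n) ℝ).sum_repr x
    simp only [EuclideanSpace.basisFun_repr, EuclideanSpace.basisFun_apply] at h
    exact h.symm
  conv_lhs => rw [hx]
  rw [map_sum]
  apply Finset.sum_congr rfl
  intro i _
  rw [map_smul]
  simp

lemma one_var_bound {h h' : ℝ → ℝ} {M p : ℝ} (hp : 0 < p) (hM : 0 ≤ M)
    (hcont : ContinuousOn h (Set.Icc 0 1))
    (hder : ∀ t ∈ Set.Ioo (0:ℝ) 1, HasDerivAt h (h' t) t)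
    (hb : ∀ t ∈ Set.Ioo (0:ℝ) 1, |h' t| ≤ M * t ^ (p - 1)) :
    |h 1 - h 0| ≤ M / p := by
  have φder : ∀ t ∈ Set.Ioo (0:ℝ) 1,
      HasDerivAt (fun t : ℝ => (M / p) * t ^ p) (M * t ^ (p - 1)) t := by
    intro t ht
    have h1 : HasDerivAt (fun t : ℝ => t ^ p) (p * t ^ (p - 1)) t :=
      Real.hasDerivAt_rpow_const (Or.inl (ne_of_gt ht.1))
    have h2 := h1.const_mul (M / p)
    refine h2.congr_deriv ?_
    rw [← mul_assoc, div_mul_cancel₀ _ hp.ne']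
  have φcont : ContinuousOn (fun t : ℝ => (M / p) * t ^ p) (Set.Icc 0 1) := by
    apply ContinuousOn.mul continuousOn_const
    intro t ht
    apply ContinuousAt.continuousWithinAt
    apply Real.continuousAt_rpow_const
    right; exact hp.le
  have habs : ∀ s : ℝ, s = 1 ∨ s = -1 →
      s * (h 1 - h 0) ≤ M / p := by
    intro s hs
    set g : ℝ → ℝ := fun t => (M / p) * t ^ p - s * h t with hg
    have gmono : MonotoneOn g (Set.Icc 0 1) := by
      apply monotoneOn_of_deriv_nonneg (convex_Icc 0 1)
      · exact φcont.sub (continuousOn_const.mul hcont)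
      · rw [interior_Icc]
        intro t ht
        exact ((φder t ht).sub ((hder t ht).const_mul s)).differentiableAt.differentiableWithinAt
      · rw [interior_Icc]
        intro t ht
        rw [(show HasDerivAt g _ t from (φder t ht).sub ((hder t ht).const_mul s)).deriv]
        have := hb t ht
        have habs' := abs_le.1 this
        rcases hs with rfl | rfl
        · simp only [one_mul]; linarith [habs'.2]
        · simp only [neg_one_mul]; linarith [habs'.1]
    have h01 : g 0 ≤ g 1 := gmono (Set.mem_Icc.2 ⟨le_refl 0, zero_le_one⟩)
      (Set.mem_Icc.2 ⟨zero_le_one, le_refl 1⟩) zero_le_one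
    have e0 : g 0 = - (s * h 0) := by simp [hg, Real.zero_rpow (ne_of_gt hp)]
    have e1 : g 1 = M / p - s * h 1 := by simp [hg, Real.one_rpow]
    rw [e0, e1] at h01
    have hexp : s * (h 1 - h 0) = s * h 1 - s * h 0 := by ring
    linarith
  have h1 := habs 1 (Or.inl rfl)
  have h2 := habs (-1) (Or.inr rfl)
  rw [abs_le]
  constructor <;> nlinarith

end Anal
section Main
variable {n : ℕ}

lemma pdM_contDiffOn {U : Set (En n)} {f : En n → ℝ} {k : ℕ} (hU : IsOpen U) (β : Fin n → ℕ)
    (hf : ContDiffOn ℝ ((∑ i, β i) + k : ℕ) f U) : ContDiffOn ℝ (k : ℕ) (pdM β f) U := by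
  rw [pdM_eq_pdL]
  exact pdL_contDiffOn hU _ (by rwa [length_mList])

theorem main_aux (a : ℝ) (ha : 0 < a) (m : ℕ) (α : ℝ) (hα0 : 0 < α) (hα1 : α ≤ 1)
    (f : En n → ℝ) (hf : ContDiffOn ℝ (m : ℕ∞) f (Metric.ball 0 a))
    (c : (Fin n → ℕ) → ℝ) (hc : ∀ δ, 0 ≤ c δ)
    (hH : ∀ δ : Fin n → ℕ, (∑ i, δ i) = m →
      ∀ x ∈ Metric.ball (0 : En n) a, |pdM δ f x - pdM δ f 0| ≤ c δ * ‖x‖ ^ α) :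
    ∀ j : ℕ, j ≤ m → ∀ β : Fin n → ℕ, (∑ i, β i) + j = m →
      ∀ x ∈ Metric.ball (0 : En n) a,
        |pdM β (fun y => f y - taylorPoly m f y) x| ≤ ‖x‖ ^ ((j : ℝ) + α) * Sm m c β := by
  set U : Set (En n) := Metric.ball 0 a with hUdef
  have hU : IsOpen U := Metric.isOpen_ball
  set T : En n → ℝ := taylorPoly m f with hTdef
  set R : En n → ℝ := fun y => f y - T y with hRdef
  have hfm : ContDiffOn ℝ ((m : ℕ) : WithTop ℕ∞) f U := by exact_mod_cast hf
  have hT : ContDiff ℝ (⊤ : ℕ∞) T := taylor_smooth m f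
  have hTm : ContDiff ℝ ((m : ℕ) : WithTop ℕ∞) T :=
    hT.of_le (by exact_mod_cast (le_top : (m : ℕ∞) ≤ ⊤))
  have hR : ContDiffOn ℝ ((m : ℕ) : WithTop ℕ∞) R U := hfm.sub hTm.contDiffOn
  have h0U : (0 : En n) ∈ U := Metric.mem_ball_self ha
  have hzero : ∀ β' : Fin n → ℕ, (∑ i, β' i) ≤ m → pdM β' R 0 = 0 := by
    intro β' hβ'
    rw [pdM_sub hU β' (hfm.of_le (by exact_mod_cast hβ')) hT h0U]
    show pdM β' f 0 - pdM β' T 0 = 0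
    rw [hTdef, pdM_taylor_at_zero f hβ']
    ring
  intro j
  induction j with
  | zero =>
      intro _ β hβ x hx
      have hβm : ∑ i, β i = m := by omega
      rw [pdM_sub hU β (hfm.of_le (by exact_mod_cast hβm.le)) hT hx]
      show |pdM β f x - pdM β T x| ≤ _
      rw [hTdef, pdM_taylor_of_top f hβm]
      rw [Sm_top hβm]
      have h1 := hH β hβm x hx
      have h2 : ((0:ℕ) : ℝ) + α = α := by simp
      rw [h2]
      calc |pdM β f x - pdM β f 0| ≤ c β * ‖x‖ ^ α := h1
      _ = ‖x‖ ^ α * c β := by ring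
  | succ j ih =>
      intro hj1 β hβ x hx
      have hβ1 : (∑ i, β i) + 1 ≤ m := by omega
      by_cases hx0 : x = 0
      · subst hx0
        rw [hzero β (by omega)]
        simp only [abs_zero]
        apply mul_nonneg _ (Sm_nonneg hc β)
        positivity
      · have hnorm_pos : 0 < ‖x‖ := norm_pos_iff.2 hx0
        have hxU : ∀ t ∈ Set.Icc (0:ℝ) 1, t • x ∈ U := by
          intro t ht
          rw [hUdef, Metric.mem_ball, dist_zero_right] at hx ⊢
          rw [norm_smul, Real.norm_eq_abs]
          have h1 : |t| ≤ 1 := abs_le.2 ⟨by linarith [ht.1], ht.2⟩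
          nlinarith [norm_nonneg x]
        set g := pdM β R with hgdef
        have hgC1 : ContDiffOn ℝ ((1:ℕ) : WithTop ℕ∞) g U := by
          apply pdM_contDiffOn hU β
          apply hR.of_le
          exact_mod_cast hβ1
        have hgdiff : ∀ y ∈ U, DifferentiableAt ℝ g y := fun y hy =>
          ((hgC1.differentiableOn (by simp)) y hy).differentiableAt
            (hU.mem_nhds hy)
        have hcomm : ∀ i : Fin n, Set.EqOn (pdM (upd β i) R) (pd i g) U := fun i =>
          pdM_upd hU β i (hR.of_le (by exact_mod_cast hβ1))
        have hder : ∀ t ∈ Set.Ioo (0:ℝ) 1, HasDerivAt (fun t => g (t • x))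
            (∑ i, x i * pdM (upd β i) R (t • x)) t := by
          intro t ht
          have htU : t • x ∈ U := hxU t (Set.mem_Icc.2 ⟨ht.1.le, ht.2.le⟩)
          have hsm : HasDerivAt (fun t : ℝ => t • x) x t := by
            simpa using (hasDerivAt_id t).smul_const x
          have hcomp := ((hgdiff _ htU).hasFDerivAt).comp_hasDerivAt t hsm
          refine hcomp.congr_deriv ?_
          rw [clm_decomp x (fderiv ℝ g (t • x))]
          apply Finset.sum_congr rfl
          intro i _
          rw [hcomm i htU]
          rfl
        have hcont : ContinuousOn (fun t : ℝ => g (t • x)) (Set.Icc 0 1) := by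
          apply ContinuousOn.comp (hgC1.continuousOn)
            ((continuous_id.smul continuous_const).continuousOn)
          intro t ht
          exact hxU t ht
        set p : ℝ := (j + 1 : ℝ) + α with hpdef
        have hp : 0 < p := by positivity
        set M : ℝ := ‖x‖ ^ p * ((j + 1 : ℝ) * Sm m c β) with hMdef
        have hM : 0 ≤ M := by
          apply mul_nonneg (Real.rpow_nonneg (norm_nonneg x) p)
          apply mul_nonneg (by positivity) (Sm_nonneg hc β)
        have hb : ∀ t ∈ Set.Ioo (0:ℝ) 1,
            |∑ i, x i * pdM (upd β i) R (t • x)| ≤ M * t ^ (p - 1) := by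
          intro t ht
          have htU : t • x ∈ U := hxU t (Set.mem_Icc.2 ⟨ht.1.le, ht.2.le⟩)
          have hterm : ∀ i : Fin n, |x i * pdM (upd β i) R (t • x)|
              ≤ ‖x‖ * ((t ^ ((j:ℝ) + α) * ‖x‖ ^ ((j:ℝ) + α)) * Sm m c (upd β i)) := by
            intro i
            rw [abs_mul]
            have h1 : |pdM (upd β i) R (t • x)| ≤ ‖t • x‖ ^ ((j:ℝ) + α) * Sm m c (upd β i) := by
              apply ih (by omega) (upd β i) (by rw [sum_upd]; omega) _ htU
            have h2 : ‖t • x‖ ^ ((j:ℝ) + α) = t ^ ((j:ℝ) + α) * ‖x‖ ^ ((j:ℝ) + α) := by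
              rw [norm_smul, Real.norm_eq_abs, abs_of_pos ht.1]
              exact Real.mul_rpow ht.1.le (norm_nonneg x)
            have h3 : 0 ≤ ‖t • x‖ ^ ((j:ℝ) + α) * Sm m c (upd β i) := by
              apply mul_nonneg (Real.rpow_nonneg (norm_nonneg _) _) (Sm_nonneg hc _)
            calc |x i| * |pdM (upd β i) R (t • x)|
                ≤ ‖x‖ * (‖t • x‖ ^ ((j:ℝ) + α) * Sm m c (upd β i)) := by
                  apply mul_le_mul (abs_coord_le_norm x i) h1 (abs_nonneg _) (norm_nonneg x)
            _ = ‖x‖ * ((t ^ ((j:ℝ) + α) * ‖x‖ ^ ((j:ℝ) + α)) * Sm m c (upd β i)) := by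
                  rw [h2]
          calc |∑ i, x i * pdM (upd β i) R (t • x)|
              ≤ ∑ i, |x i * pdM (upd β i) R (t • x)| := Finset.abs_sum_le_sum_abs _ _
          _ ≤ ∑ i, ‖x‖ * ((t ^ ((j:ℝ) + α) * ‖x‖ ^ ((j:ℝ) + α)) * Sm m c (upd β i)) :=
                Finset.sum_le_sum fun i _ => hterm i
          _ = (‖x‖ * ‖x‖ ^ ((j:ℝ) + α)) * t ^ ((j:ℝ) + α) * ∑ i, Sm m c (upd β i) := by
                rw [Finset.mul_sum]
                apply Finset.sum_congr rfl
                intro i _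
                ring
          _ = M * t ^ (p - 1) := by
                rw [Sm_rec hβ]
                have e1 : ‖x‖ * ‖x‖ ^ ((j:ℝ) + α) = ‖x‖ ^ p := by
                  rw [hpdef]
                  rw [show ‖x‖ * ‖x‖ ^ ((j:ℝ) + α) = ‖x‖ ^ (1:ℝ) * ‖x‖ ^ ((j:ℝ) + α) by
                    rw [Real.rpow_one]]
                  rw [← Real.rpow_add hnorm_pos]
                  ring_nf
                have e2 : ((j:ℝ) + α) = p - 1 := by rw [hpdef]; ring
                rw [e1, e2, hMdef]
                ring
        have hfinal := one_var_bound hp hM hcont hder hb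
        rw [show (1:ℝ) • x = x from one_smul ℝ x,
          show (0:ℝ) • x = (0 : En n) from zero_smul ℝ x,
          show g 0 = 0 from hzero β (by omega), sub_zero] at hfinal
        calc |g x| ≤ M / p := hfinal
        _ = ‖x‖ ^ p * Sm m c β * ((j + 1 : ℝ) / p) := by rw [hMdef]; field_simp
        _ ≤ ‖x‖ ^ p * Sm m c β * 1 := by
              apply mul_le_mul_of_nonneg_left _ (by
                exact mul_nonneg (Real.rpow_nonneg (norm_nonneg x) p) (Sm_nonneg hc β))
              rw [div_le_one hp, hpdef]
              linarith
        _ = ‖x‖ ^ (((j+1 : ℕ) : ℝ) + α) * Sm m c β := by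
              rw [mul_one, hpdef]
              push_cast
              ring_nf

end Main

end S4

/-- Hölder estimate for the Taylor remainder.  If `f ∈ Cᵐ(U)` on the open
ball `U = B(0,a) ⊆ ℝⁿ`, `0 < α ≤ 1`, and the order-`m` derivatives satisfy
`|∂^δ f(x) − ∂^δ f(0)| ≤ c_δ ‖x‖^α` on `U`, then for every multi-index `β` with
`|β| ≤ m` and every `x ∈ U`,
`|∂^β (f − T_m f)(x)| ≤ ‖x‖^(m+α−|β|) Σ_{|γ| = m−|β|} (1/γ!) c_{γ+β}`. -/
theorem stmt_4 (n : ℕ) (a : ℝ) (ha : 0 < a) (m : ℕ) (α : ℝ) (hα0 : 0 < α) (hα1 : α ≤ 1)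
    (f : En n → ℝ) (hf : ContDiffOn ℝ (m : ℕ∞) f (Metric.ball 0 a))
    (c : (Fin n → ℕ) → ℝ) (hc : ∀ δ, 0 ≤ c δ)
    (hH : ∀ δ : Fin n → ℕ, (∑ i, δ i) = m →
      ∀ x ∈ Metric.ball (0 : En n) a, |pdM δ f x - pdM δ f 0| ≤ c δ * ‖x‖ ^ α)
    (β : Fin n → ℕ) (hβ : (∑ i, β i) ≤ m)
    (x : En n) (hx : x ∈ Metric.ball (0 : En n) a) :
    |pdM β (fun y => f y - taylorPoly m f y) x| ≤
      ‖x‖ ^ ((m : ℝ) + α - ((∑ i, β i : ℕ) : ℝ)) *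
        ∑ γ ∈ (Fintype.piFinset fun _ : Fin n => Finset.range (m + 1)).filter
            (fun γ => (∑ i, γ i) + (∑ i, β i) = m),
          (∏ i, (Nat.factorial (γ i) : ℝ))⁻¹ * c (fun i => γ i + β i) := by
  have hj : (∑ i, β i) + (m - ∑ i, β i) = m := by omega
  have h := S4.main_aux a ha m α hα0 hα1 f hf c hc hH (m - ∑ i, β i) (by omega) β hj x hx
  have he : (m : ℝ) + α - ((∑ i, β i : ℕ) : ℝ) = ((m - ∑ i, β i : ℕ) : ℝ) + α := by
    rw [Nat.cast_sub hβ]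
    ring
  rw [he]
  exact h
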